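/- (Layer-wise multi-step projection convergence.) Let the coordinates of ℝ^d be partitioned into Q disjoint blocks (layers), and for a vector v let v^q denote its block-q component and ∇^q f the block-q component of ∇f. Let f_1, …, f_N : ℝ^d → ℝ be L-smooth with ‖∇f_i‖ ≤ G_f, and suppose that for every client i and block q the map θ ↦ ∇^q f_i(θ) is L_q-Lipschitz with respect to the full Euclidean norm. Let ρ_i > 0 sum to 1, ρ_min = min_i ρ_i, c = ρ_min/G_f, F = Σ ρ_i f_i, and assume F ≥ F⋆. Fix η_l, η_g > 0, K_i ≥ 1 with K_max = max_i K_i. Consider a server trajectory θ_{t+1} = θ_t − η_g g_t, where at each round, for every block q, the block components g_i^{t,q} of the nonzero accumulated client updates (from K_i local gradient-descent steps of rate η_l starting at θ_t) satisfy the exact layer-wise alignment ⟨g_i^{t,q}/‖g_i^{t,q}‖, g_t^q⟩ = ρ_i for all i, and ‖g_t^q‖ ≤ G^q. Define B_q = (L_q G_f/2)(G^q + Σ_i ρ_i²), B_layer = Σ_{q=1}^Q B_q, and G_layer² = Σ_{q=1}^Q (G^q)². Then for any T ≥ 1: (1/T) Σ_{t=0}^{T−1} ‖∇F(θ_t)‖²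 ≤ (F(θ_0) − F⋆)/(c η_g T) + L η_g G_layer²/(2c) + (B_layer/c) η_l (K_max − 1). -/

import Mathlib

open scoped InnerProductSpace BigOperators

/-- Local gradient-descent trajectory. -/
noncomputable def traj {E : Type*} [NormedAddCommGroup E] [InnerProductSpace ℝ E]
    [CompleteSpace E] (f : E → ℝ) (ηl : ℝ) (θ : E) : ℕ → E
  | 0 => θ
  | k + 1 => traj f ηl θ k - ηl • gradient f (traj f ηl θ k)

section Aux

variable {E : Type*} [NormedAddCommGroup E] [InnerProductSpace ℝ E] [CompleteSpace E]

lemma hasGradientAt_weighted_sum {ι : Type*} [Fintype ι] (f : ι → E → ℝ) (ρ : ι → ℝ)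
    (hdiff : ∀ i, Differentiable ℝ (f i)) (x : E) :
    HasGradientAt (fun y => ∑ i, ρ i * f i y) (∑ i, ρ i • gradient (f i) x) x := by
  rw [hasGradientAt_iff_hasFDerivAt]
  have h1 : ∀ i : ι, HasFDerivAt (fun y => ρ i * f i y)
      (ρ i • (InnerProductSpace.toDual ℝ E (gradient (f i) x) : E →L[ℝ] ℝ)) x := by
    intro i
    exact (hasGradientAt_iff_hasFDerivAt.mp
      ((hdiff i x).hasGradientAt)).const_smul (ρ i)
  have := HasFDerivAt.fun_sum (fun i (_ : i ∈ Finset.univ) => h1 i)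
  convert this using 1
  · rfl
  · rfl
  · simp [map_sum, map_smul]

/-- Descent lemma for an L-smooth function. -/
lemma descent_lemma (f : E → ℝ) (L : ℝ) (hL : 0 ≤ L) (hdiff : Differentiable ℝ f)
    (hlip : ∀ x y, ‖gradient f x - gradient f y‖ ≤ L * ‖x - y‖) (x v : E) :
    f (x + v) ≤ f x + ⟪gradient f x, v⟫_ℝ + L / 2 * ‖v‖ ^ 2 := by
  set φ : ℝ → ℝ := fun t => f (x + t • v) with hφ
  have hline : ∀ t : ℝ, HasDerivAt (fun s : ℝ => x + s • v) v t := by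
    intro t
    simpa using ((hasDerivAt_id t).smul_const v).const_add x
  have hder : ∀ t : ℝ, HasDerivAt φ ⟪gradient f (x + t • v), v⟫_ℝ t := by
    intro t
    have h1 : HasFDerivAt f
        ((InnerProductSpace.toDual ℝ E) (gradient f (x + t • v)) : E →L[ℝ] ℝ) (x + t • v) :=
      hasGradientAt_iff_hasFDerivAt.mp ((hdiff _).hasGradientAt)
    have := h1.comp_hasDerivAt t (hline t)
    simpa [InnerProductSpace.toDual_apply_apply, real_inner_comm, hφ, Function.comp_def] using this
  have hgradcont : Continuous fun t : ℝ => gradient f (x + t • v) := by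
    have hlc : LipschitzWith (Real.toNNReal L) (gradient f) := by
      refine LipschitzWith.of_dist_le_mul fun a b => ?_
      rw [dist_eq_norm, dist_eq_norm]
      calc ‖gradient f a - gradient f b‖ ≤ L * ‖a - b‖ := hlip a b
        _ = (Real.toNNReal L : ℝ) * ‖a - b‖ := by rw [Real.coe_toNNReal L hL]
    exact hlc.continuous.comp (by continuity)
  have hcont : Continuous fun t : ℝ => ⟪gradient f (x + t • v), v⟫_ℝ :=
    hgradcont.inner continuous_const
  have hFTC : ∫ t in (0:ℝ)..1, ⟪gradient f (x + t • v), v⟫_ℝ = φ 1 - φ 0 := by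
    have := intervalIntegral.integral_deriv_eq_sub (f := φ) (a := 0) (b := 1)
      (fun t _ => (hder t).differentiableAt) ?_
    · rw [← this]
      apply intervalIntegral.integral_congr
      intro t _
      exact ((hder t).deriv).symm
    · apply Continuous.intervalIntegrable
      have : deriv φ = fun t => ⟪gradient f (x + t • v), v⟫_ℝ :=
        funext fun t => (hder t).deriv
      rw [this]; exact hcont
  have hbound : ∀ t ∈ Set.Icc (0:ℝ) 1,
      ⟪gradient f (x + t • v), v⟫_ℝ ≤ ⟪gradient f x, v⟫_ℝ + L * t * ‖v‖ ^ 2 := by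
    intro t ht
    have h1 : ⟪gradient f (x + t • v) - gradient f x, v⟫_ℝ ≤ L * t * ‖v‖ ^ 2 := by
      calc ⟪gradient f (x + t • v) - gradient f x, v⟫_ℝ
          ≤ ‖gradient f (x + t • v) - gradient f x‖ * ‖v‖ := real_inner_le_norm _ _
        _ ≤ (L * ‖(x + t • v) - x‖) * ‖v‖ := by
            apply mul_le_mul_of_nonneg_right (hlip _ _) (norm_nonneg _)
        _ = L * t * ‖v‖ ^ 2 := by
            rw [add_sub_cancel_left, norm_smul, Real.norm_eq_abs, abs_of_nonneg ht.1]; ring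
    have h2 : ⟪gradient f (x + t • v), v⟫_ℝ
        = ⟪gradient f x, v⟫_ℝ + ⟪gradient f (x + t • v) - gradient f x, v⟫_ℝ := by
      rw [← inner_add_left]
      congr 1
      abel
    rw [h2]; linarith
  have hint : ∫ t in (0:ℝ)..1, ⟪gradient f (x + t • v), v⟫_ℝ
      ≤ ∫ t in (0:ℝ)..1, (⟪gradient f x, v⟫_ℝ + L * t * ‖v‖ ^ 2) := by
    apply intervalIntegral.integral_mono_on (by norm_num)
    · exact hcont.intervalIntegrable _ _
    · exact (by continuity : Continuous fun t : ℝ => ⟪gradient f x, v⟫_ℝ + L * t * ‖v‖ ^ 2).intervalIntegrable _ _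
    · exact hbound
  have hval : ∫ t in (0:ℝ)..1, (⟪gradient f x, v⟫_ℝ + L * t * ‖v‖ ^ 2)
      = ⟪gradient f x, v⟫_ℝ + L / 2 * ‖v‖ ^ 2 := by
    have hint2 : IntervalIntegrable (fun t : ℝ => L * t * ‖v‖ ^ 2) MeasureTheory.volume 0 1 := by
      apply Continuous.intervalIntegrable; continuity
    rw [intervalIntegral.integral_add (intervalIntegrable_const) hint2]
    have h3 : ∫ t in (0:ℝ)..1, L * t * ‖v‖ ^ 2 = L * ‖v‖^2 * ∫ t in (0:ℝ)..1, t := by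
      rw [← intervalIntegral.integral_const_mul]
      congr 1; funext t; ring
    rw [h3, integral_id, intervalIntegral.integral_const]; norm_num; ring
  have : φ 1 - φ 0 ≤ ⟪gradient f x, v⟫_ℝ + L / 2 * ‖v‖ ^ 2 := by
    rw [← hFTC]; rw [hval] at hint; exact hint
  have e1 : φ 1 = f (x + v) := by simp [hφ]
  have e0 : φ 0 = f x := by simp [hφ]
  rw [e1, e0] at this; linarith

lemma traj_dist (f : E → ℝ) (ηl Gf : ℝ) (hηl : 0 ≤ ηl)
    (hGf : ∀ x, ‖gradient f x‖ ≤ Gf) (θ : E) :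
    ∀ k : ℕ, ‖traj f ηl θ k - θ‖ ≤ ηl * Gf * k := by
  intro k
  have hGf0 : 0 ≤ Gf := le_trans (norm_nonneg _) (hGf θ)
  induction k with
  | zero => simp [traj]
  | succ k ih =>
    have heq : traj f ηl θ (k+1) - θ
        = (traj f ηl θ k - θ) - ηl • gradient f (traj f ηl θ k) := by
      show traj f ηl θ k - ηl • gradient f (traj f ηl θ k) - θ = _
      abel
    rw [heq]
    have h1 : ‖ηl • gradient f (traj f ηl θ k)‖ ≤ ηl * Gf := by
      rw [norm_smul, Real.norm_eq_abs, abs_of_nonneg hηl]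
      exact mul_le_mul_of_nonneg_left (hGf _) hηl
    calc ‖(traj f ηl θ k - θ) - ηl • gradient f (traj f ηl θ k)‖
        ≤ ‖traj f ηl θ k - θ‖ + ‖ηl • gradient f (traj f ηl θ k)‖ := norm_sub_le _ _
      _ ≤ ηl * Gf * k + ηl * Gf := add_le_add ih h1
      _ = ηl * Gf * (k+1 : ℕ) := by push_cast; ring

end Aux

lemma pilp_sum_apply {Q : Type*} [Fintype Q] {n : Q → ℕ} {ι : Type*} (s : Finset ι)
    (x : ι → PiLp 2 (fun q : Q => EuclideanSpace ℝ (Fin (n q)))) (q : Q) :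
    (∑ i ∈ s, x i) q = ∑ i ∈ s, x i q := by
  induction s using Finset.cons_induction with
  | empty => rfl
  | cons a s ha ih => rw [Finset.sum_cons, Finset.sum_cons, ← ih]; rfl
set_option maxHeartbeats 1000000 in
/-- **Layer-wise multi-step projection convergence.**
`ℝ^d` is partitioned into `Q` coordinate blocks of sizes `n q` (with `Σ_q n q = d`),
modeled as `PiLp 2 (fun q => EuclideanSpace ℝ (Fin (n q)))`; `v q` is the block-`q`
component of `v`. Under layer-wise exact alignment constraints
`⟪g_i^{t,q}/‖g_i^{t,q}‖, g_t^q⟫ = ρ_i` and block norm bounds `‖g_t^q‖ ≤ G^q`,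
`(1/T) Σ_{t<T} ‖∇F(θ_t)‖² ≤ (F(θ₀)−F⋆)/(c η_g T) + L η_g G_layer²/(2c)
  + (B_layer/c) η_l (K_max − 1)`. -/
theorem layerwise_craft_convergence {d N Q : ℕ} (hd : 1 ≤ d) (hN : 1 ≤ N) (hQ : 1 ≤ Q)
    (n : Fin Q → ℕ) (hn : ∑ q, n q = d)
    (f : Fin N → PiLp 2 (fun q : Fin Q => EuclideanSpace ℝ (Fin (n q))) → ℝ)
    (L Gf : ℝ) (Lq : Fin Q → ℝ)
    (hdiff : ∀ i, Differentiable ℝ (f i))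
    (hLip : ∀ i x y, ‖gradient (f i) x - gradient (f i) y‖ ≤ L * ‖x - y‖)
    (hGf : ∀ i x, ‖gradient (f i) x‖ ≤ Gf)
    (hLipBlock : ∀ i q x y, ‖gradient (f i) x q - gradient (f i) y q‖ ≤ Lq q * ‖x - y‖)
    (ρ : Fin N → ℝ) (hρpos : ∀ i, 0 < ρ i) (hρsum : ∑ i, ρ i = 1)
    (F : PiLp 2 (fun q : Fin Q => EuclideanSpace ℝ (Fin (n q))) → ℝ)
    (hF : F = fun x => ∑ i, ρ i * f i x)
    (Fstar : ℝ) (hFstar : ∀ x, Fstar ≤ F x)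
    (ρmin : ℝ) (hρminlb : ∀ i, ρmin ≤ ρ i) (hρminmem : ∃ i, ρ i = ρmin)
    (c : ℝ) (hc : c = ρmin / Gf)
    (ηl ηg : ℝ) (hηl : 0 < ηl) (hηg : 0 < ηg)
    (K : Fin N → ℕ) (hK : ∀ i, 1 ≤ K i)
    (Kmax : ℕ) (hKmaxub : ∀ i, K i ≤ Kmax) (hKmaxmem : ∃ i, K i = Kmax)
    (θt g : ℕ → PiLp 2 (fun q : Fin Q => EuclideanSpace ℝ (Fin (n q))))
    (hstep : ∀ t, θt (t + 1) = θt t - ηg • g t)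
    (gI : ℕ → Fin N → PiLp 2 (fun q : Fin Q => EuclideanSpace ℝ (Fin (n q))))
    (hgI : ∀ t i, gI t i = ηl • ∑ k ∈ Finset.range (K i),
        gradient (f i) (traj (f i) ηl (θt t) k))
    (hne : ∀ t i q, gI t i q ≠ 0)
    (halign : ∀ t i q, ⟪‖gI t i q‖⁻¹ • gI t i q, g t q⟫_ℝ = ρ i)
    (Gq : Fin Q → ℝ) (hGq : ∀ t q, ‖g t q‖ ≤ Gq q)
    (Bq : Fin Q → ℝ) (hBq : ∀ q, Bq q = Lq q * Gf / 2 * (Gq q + ∑ i, (ρ i) ^ 2))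
    (Blayer : ℝ) (hBlayer : Blayer = ∑ q, Bq q)
    (Glayer2 : ℝ) (hGlayer2 : Glayer2 = ∑ q, (Gq q) ^ 2)
    (T : ℕ) (hT : 1 ≤ T) :
    (1 / (T : ℝ)) * ∑ t ∈ Finset.range T, ‖gradient F (θt t)‖ ^ 2 ≤
      (F (θt 0) - Fstar) / (c * ηg * T) + L * ηg * Glayer2 / (2 * c)
      + Blayer / c * (ηl * ((Kmax : ℝ) - 1)) := by
  classical
  obtain ⟨i0, hi0⟩ := hρminmem
  have hq0 : (0 : ℕ) < Q := hQ
  set q0 : Fin Q := ⟨0, hq0⟩ with hq0def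
  -- a nonzero vector in the ambient space
  obtain ⟨q1, hq1⟩ : ∃ q1, 0 < n q1 := by
    by_contra h
    push_neg at h
    have : ∑ q, n q = 0 := Finset.sum_eq_zero fun q _ => Nat.le_zero.mp (h q)
    omega
  set v0 : PiLp 2 (fun q : Fin Q => EuclideanSpace ℝ (Fin (n q))) :=
    WithLp.toLp 2 (Pi.single (M := fun q : Fin Q => EuclideanSpace ℝ (Fin (n q))) q1 (EuclideanSpace.single (⟨0, hq1⟩ : Fin (n q1)) (1:ℝ))) with hv0def
  have hv0ne : v0 ≠ 0 := by
    intro h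
    have h1 : v0 q1 = 0 := by rw [h]; rfl
    rw [hv0def, PiLp.toLp_apply, Pi.single_eq_same] at h1
    have h2 := congrArg norm h1
    rw [EuclideanSpace.norm_single] at h2
    norm_num at h2
  have hv0pos : 0 < ‖v0‖ := norm_pos_iff.mpr hv0ne
  -- nonnegativity of constants
  have hL0 : 0 ≤ L := by
    have h := hLip i0 v0 0
    rw [sub_zero] at h
    nlinarith [norm_nonneg (gradient (f i0) v0 - gradient (f i0) 0)]
  have hLq0 : ∀ q, 0 ≤ Lq q := by
    intro q
    have h := hLipBlock i0 q v0 0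
    rw [sub_zero] at h
    nlinarith [norm_nonneg (gradient (f i0) v0 q - gradient (f i0) 0 q)]
  have hGf00 : 0 ≤ Gf := le_trans (norm_nonneg _) (hGf i0 0)
  have hGfpos : 0 < Gf := by
    rcases lt_or_eq_of_le hGf00 with h | h
    · exact h
    · exfalso
      have hz : ∀ x, gradient (f i0) x = 0 := fun x =>
        norm_le_zero_iff.mp (h ▸ hGf i0 x)
      have hzero : gI 0 i0 = 0 := by
        rw [hgI]
        simp [hz]
      exact hne 0 i0 q0 (by rw [hzero]; rfl)
  have hρminpos : 0 < ρmin := hi0 ▸ hρpos i0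
  have hcpos : 0 < c := hc ▸ div_pos hρminpos hGfpos
  have hKmax1 : 1 ≤ Kmax := le_trans (hK i0) (hKmaxub i0)
  have hKmaxR : (1:ℝ) ≤ (Kmax:ℝ) := by exact_mod_cast hKmax1
  -- gradient of F
  have hgradF : ∀ x, gradient F x = ∑ i, ρ i • gradient (f i) x := by
    intro x
    rw [hF]
    exact (hasGradientAt_weighted_sum f ρ hdiff x).gradient
  have hFdiff : Differentiable ℝ F := by
    rw [hF]
    exact fun x => (hasGradientAt_weighted_sum f ρ hdiff x).differentiableAt
  have hFlip : ∀ x y, ‖gradient F x - gradient F y‖ ≤ L * ‖x - y‖ := by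
    intro x y
    rw [hgradF, hgradF, ← Finset.sum_sub_distrib]
    calc ‖∑ i, (ρ i • gradient (f i) x - ρ i • gradient (f i) y)‖
        ≤ ∑ i, ‖ρ i • gradient (f i) x - ρ i • gradient (f i) y‖ := norm_sum_le _ _
      _ ≤ ∑ i, ρ i * (L * ‖x - y‖) := by
          apply Finset.sum_le_sum
          intro i _
          rw [← smul_sub, norm_smul, Real.norm_eq_abs, abs_of_pos (hρpos i)]
          exact mul_le_mul_of_nonneg_left (hLip i x y) (le_of_lt (hρpos i))
      _ = L * ‖x - y‖ := by rw [← Finset.sum_mul, hρsum, one_mul]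
  have hFGf : ∀ x, ‖gradient F x‖ ≤ Gf := by
    intro x
    rw [hgradF]
    calc ‖∑ i, ρ i • gradient (f i) x‖ ≤ ∑ i, ‖ρ i • gradient (f i) x‖ := norm_sum_le _ _
      _ ≤ ∑ i, ρ i * Gf := by
          apply Finset.sum_le_sum
          intro i _
          rw [norm_smul, Real.norm_eq_abs, abs_of_pos (hρpos i)]
          exact mul_le_mul_of_nonneg_left (hGf i x) (le_of_lt (hρpos i))
      _ = Gf := by rw [← Finset.sum_mul, hρsum, one_mul]
  -- key per-round inner-product bound
  have key : ∀ t, c * ‖gradient F (θt t)‖^2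
      ≤ ⟪gradient F (θt t), g t⟫_ℝ + ηl * ((Kmax:ℝ) - 1) * Blayer := by
    intro t
    have hq : ∀ q, ρmin * ‖gradient F (θt t) q‖ - ηl * ((Kmax:ℝ)-1) * Bq q
        ≤ ⟪gradient F (θt t) q, g t q⟫_ℝ := by
      intro q
      set δ : ℝ := Lq q * ηl * Gf * ((Kmax:ℝ)-1)/2 with hδ
      have hδ0 : 0 ≤ δ := by
        rw [hδ]
        have := hLq0 q
        have h1 : (0:ℝ) ≤ (Kmax:ℝ) - 1 := by linarith
        positivity
      have hGq0 : 0 ≤ Gq q := le_trans (norm_nonneg _) (hGq t q)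
      -- per-client bound
      have hi : ∀ i, ρ i * ‖gradient (f i) (θt t) q‖ - ρ i * δ - δ * Gq q
          ≤ ⟪gradient (f i) (θt t) q, g t q⟫_ℝ := by
        intro i
        set u := gradient (f i) (θt t) q with hu
        set S := ∑ k ∈ Finset.range (K i), gradient (f i) (traj (f i) ηl (θt t) k) q with hS
        set m := ((K i : ℝ))⁻¹ • S with hm
        have hKi : (0:ℝ) < (K i : ℝ) := by exact_mod_cast hK i
        have hgiq : gI t i q = ηl • S := by
          rw [hgI t i]
          show ηl • ((∑ k ∈ Finset.range (K i), gradient (f i) (traj (f i) ηl (θt t) k)) q) = _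
          rw [pilp_sum_apply]
        have hgiq2 : gI t i q = (ηl * (K i : ℝ)) • m := by
          rw [hgiq, hm, smul_smul]
          congr 1
          field_simp
        have hKη : 0 < ηl * (K i : ℝ) := mul_pos hηl hKi
        have hmne : m ≠ 0 := by
          intro h
          exact hne t i q (by rw [hgiq2, h, smul_zero])
        have hmn : ‖m‖ ≠ 0 := norm_ne_zero_iff.mpr hmne
        have hmnorm : ‖gI t i q‖ = (ηl * (K i : ℝ)) * ‖m‖ := by
          rw [hgiq2, norm_smul, Real.norm_eq_abs, abs_of_pos hKη]
        have hinner : ⟪m, g t q⟫_ℝ = ρ i * ‖m‖ := by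
          have h1 := halign t i q
          rw [real_inner_smul_left, hmnorm, hgiq2, real_inner_smul_left] at h1
          have hval : (ηl * (K i : ℝ)) * ‖m‖ ≠ 0 :=
            mul_ne_zero (ne_of_gt hKη) hmn
          rw [inv_mul_eq_iff_eq_mul₀ hval] at h1
          rw [show ηl * (K i:ℝ) * ‖m‖ * ρ i = ηl * ((K i:ℝ) * (‖m‖ * ρ i)) from by ring,
            show ηl * (K i:ℝ) * ⟪m, g t q⟫_ℝ = ηl * ((K i:ℝ) * ⟪m, g t q⟫_ℝ) from by ring] at h1
          have h2 := mul_left_cancel₀ (ne_of_gt hKi) (mul_left_cancel₀ (ne_of_gt hηl) h1)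
          rw [h2]
          ring
        have herr : ‖u - m‖ ≤ δ := by
          have heq : u - m = ((K i : ℝ))⁻¹ •
              (∑ k ∈ Finset.range (K i), (u - gradient (f i) (traj (f i) ηl (θt t) k) q)) := by
            rw [Finset.sum_sub_distrib, smul_sub, hm]
            congr 1
            rw [Finset.sum_const, Finset.card_range, ← Nat.cast_smul_eq_nsmul ℝ, smul_smul,
              inv_mul_cancel₀ (ne_of_gt hKi), one_smul]
          have hterm : ∀ k ∈ Finset.range (K i),
              ‖u - gradient (f i) (traj (f i) ηl (θt t) k) q‖ ≤ Lq q * (ηl * Gf * k) := by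
            intro k _
            calc ‖u - gradient (f i) (traj (f i) ηl (θt t) k) q‖
                ≤ Lq q * ‖θt t - traj (f i) ηl (θt t) k‖ := hLipBlock i q _ _
              _ = Lq q * ‖traj (f i) ηl (θt t) k - θt t‖ := by rw [norm_sub_rev]
              _ ≤ Lq q * (ηl * Gf * k) := by
                  apply mul_le_mul_of_nonneg_left _ (hLq0 q)
                  exact traj_dist (f i) ηl Gf hηl.le (hGf i) (θt t) k
          have hgauss : ∑ k ∈ Finset.range (K i), Lq q * (ηl * Gf * (k:ℝ))
              = Lq q * ηl * Gf * ((K i:ℝ) * ((K i:ℝ)-1) / 2) := by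
            have h2 : (∑ k ∈ Finset.range (K i), (k:ℝ)) = (K i : ℝ) * ((K i:ℝ) - 1) / 2 := by
              have h3 := Finset.sum_range_id_mul_two (K i)
              have h4 : ((∑ k ∈ Finset.range (K i), k : ℕ) : ℝ) * 2
                  = ((K i : ℕ) : ℝ) * (((K i : ℕ) - 1 : ℕ) : ℝ) := by exact_mod_cast h3
              rw [Nat.cast_sub (hK i)] at h4
              push_cast at h4 ⊢
              linarith
            calc ∑ k ∈ Finset.range (K i), Lq q * (ηl * Gf * (k:ℝ))
                = ∑ k ∈ Finset.range (K i), (Lq q * ηl * Gf) * (k:ℝ) := by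
                  exact Finset.sum_congr rfl fun k _ => by ring
              _ = (Lq q * ηl * Gf) * ∑ k ∈ Finset.range (K i), (k:ℝ) := by
                  rw [← Finset.mul_sum]
              _ = Lq q * ηl * Gf * ((K i:ℝ) * ((K i:ℝ)-1) / 2) := by rw [h2]
          have hsum1 : ‖∑ k ∈ Finset.range (K i), (u - gradient (f i) (traj (f i) ηl (θt t) k) q)‖
              ≤ Lq q * ηl * Gf * ((K i:ℝ) * ((K i:ℝ)-1) / 2) := by
            rw [← hgauss]
            exact le_trans (norm_sum_le _ _) (Finset.sum_le_sum hterm)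
          rw [heq, norm_smul, Real.norm_eq_abs, abs_of_pos (inv_pos.mpr hKi)]
          have hKle : (K i : ℝ) - 1 ≤ (Kmax:ℝ) - 1 := by
            have : (K i : ℝ) ≤ (Kmax : ℝ) := by exact_mod_cast hKmaxub i
            linarith
          have hLηG : 0 ≤ Lq q * ηl * Gf := mul_nonneg (mul_nonneg (hLq0 q) hηl.le) hGf00
          calc (K i:ℝ)⁻¹ * ‖∑ k ∈ Finset.range (K i), (u - gradient (f i) (traj (f i) ηl (θt t) k) q)‖
              ≤ (K i:ℝ)⁻¹ * (Lq q * ηl * Gf * ((K i:ℝ) * ((K i:ℝ)-1) / 2)) := by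
                exact mul_le_mul_of_nonneg_left hsum1 (le_of_lt (inv_pos.mpr hKi))
            _ = Lq q * ηl * Gf * (((K i:ℝ)-1) / 2) := by field_simp
            _ ≤ δ := by
                rw [hδ]
                have h5 : ((K i:ℝ)-1)/2 ≤ ((Kmax:ℝ)-1)/2 := by linarith
                calc Lq q * ηl * Gf * (((K i:ℝ)-1)/2)
                    ≤ Lq q * ηl * Gf * (((Kmax:ℝ)-1)/2) := mul_le_mul_of_nonneg_left h5 hLηG
                  _ = Lq q * ηl * Gf * ((Kmax:ℝ)-1)/2 := by ring
        -- combine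
        have h3 : ⟪u, g t q⟫_ℝ = ⟪m, g t q⟫_ℝ + ⟪u - m, g t q⟫_ℝ := by
          rw [← inner_add_left]
          congr 1
          abel
        have h4 : -(‖u - m‖ * ‖g t q‖) ≤ ⟪u - m, g t q⟫_ℝ := by
          have := abs_real_inner_le_norm (u - m) (g t q)
          have h5 := neg_abs_le ⟪u - m, g t q⟫_ℝ
          linarith
        have h5 : ‖u‖ - δ ≤ ‖m‖ := by
          have := norm_sub_norm_le u m
          linarith
        have h6 : ‖u - m‖ * ‖g t q‖ ≤ δ * Gq q :=
          mul_le_mul herr (hGq t q) (norm_nonneg _) hδ0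
        rw [h3, hinner]
        have h7 := mul_le_mul_of_nonneg_left h5 (hρpos i).le
        linarith
      -- sum over clients
      have hsplit : gradient F (θt t) q = ∑ i, ρ i • gradient (f i) (θt t) q := by
        rw [hgradF, pilp_sum_apply]
        rfl
      have h7 : ⟪gradient F (θt t) q, g t q⟫_ℝ
          = ∑ i, ρ i * ⟪gradient (f i) (θt t) q, g t q⟫_ℝ := by
        rw [hsplit, sum_inner]
        exact Finset.sum_congr rfl fun i _ => real_inner_smul_left _ _ _
      have h8 : ρmin * ‖gradient F (θt t) q‖ ≤ ∑ i, ρ i * (ρ i * ‖gradient (f i) (θt t) q‖) := by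
        have ha : ‖gradient F (θt t) q‖ ≤ ∑ i, ρ i * ‖gradient (f i) (θt t) q‖ := by
          rw [hsplit]
          refine le_trans (norm_sum_le _ _) (Finset.sum_le_sum fun i _ => ?_)
          rw [norm_smul, Real.norm_eq_abs, abs_of_pos (hρpos i)]
        calc ρmin * ‖gradient F (θt t) q‖ ≤ ρmin * ∑ i, ρ i * ‖gradient (f i) (θt t) q‖ :=
              mul_le_mul_of_nonneg_left ha hρminpos.le
          _ = ∑ i, ρmin * (ρ i * ‖gradient (f i) (θt t) q‖) := by rw [Finset.mul_sum]
          _ ≤ ∑ i, ρ i * (ρ i * ‖gradient (f i) (θt t) q‖) := by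
              refine Finset.sum_le_sum fun i _ => ?_
              exact mul_le_mul_of_nonneg_right (hρminlb i)
                (mul_nonneg (hρpos i).le (norm_nonneg _))
      have h9 : ∑ i, ρ i * (ρ i * ‖gradient (f i) (θt t) q‖ - ρ i * δ - δ * Gq q)
          ≤ ∑ i, ρ i * ⟪gradient (f i) (θt t) q, g t q⟫_ℝ :=
        Finset.sum_le_sum fun i _ => mul_le_mul_of_nonneg_left (hi i) (hρpos i).le
      have h10 : ∑ i, ρ i * (ρ i * ‖gradient (f i) (θt t) q‖ - ρ i * δ - δ * Gq q)
          = ∑ i, ρ i * (ρ i * ‖gradient (f i) (θt t) q‖) - δ * (∑ i, (ρ i)^2) - δ * Gq q := by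
        have hrw : ∀ i, ρ i * (ρ i * ‖gradient (f i) (θt t) q‖ - ρ i * δ - δ * Gq q)
            = ρ i * (ρ i * ‖gradient (f i) (θt t) q‖) - δ * (ρ i)^2 - (δ * Gq q) * ρ i := by
          intro i; ring
        rw [Finset.sum_congr rfl fun i _ => hrw i, Finset.sum_sub_distrib,
          Finset.sum_sub_distrib, ← Finset.mul_sum, ← Finset.mul_sum, hρsum, mul_one]
      have hBqδ : ηl * ((Kmax:ℝ)-1) * Bq q = δ * (Gq q + ∑ i, (ρ i)^2) := by
        rw [hBq, hδ]; ring
      rw [h7]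
      rw [hBqδ]
      linarith [h8, h9, h10]
    -- sum over layers
    have hinner_total : ⟪gradient F (θt t), g t⟫_ℝ
        = ∑ q, ⟪gradient F (θt t) q, g t q⟫_ℝ := PiLp.inner_apply _ _
    have hsumq : ρmin * (∑ q, ‖gradient F (θt t) q‖) - ηl*((Kmax:ℝ)-1)*Blayer
        ≤ ⟪gradient F (θt t), g t⟫_ℝ := by
      rw [hinner_total, hBlayer, Finset.mul_sum, Finset.mul_sum, ← Finset.sum_sub_distrib]
      exact Finset.sum_le_sum fun q _ => hq q
    have hnorm_le : ‖gradient F (θt t)‖ ≤ ∑ q, ‖gradient F (θt t) q‖ := by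
      have h1 : ‖gradient F (θt t)‖^2 = ∑ q, ‖gradient F (θt t) q‖^2 :=
        PiLp.norm_sq_eq_of_L2 _ _
      have h2 : ∑ q, ‖gradient F (θt t) q‖^2 ≤ (∑ q, ‖gradient F (θt t) q‖)^2 := by
        refine Finset.sum_sq_le_sq_sum_of_nonneg fun q _ => norm_nonneg _
      have h3 : 0 ≤ ∑ q, ‖gradient F (θt t) q‖ :=
        Finset.sum_nonneg fun q _ => norm_nonneg _
      nlinarith [norm_nonneg (gradient F (θt t))]
    have hc2 : c * ‖gradient F (θt t)‖^2 ≤ ρmin * ‖gradient F (θt t)‖ := by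
      rw [hc, div_mul_eq_mul_div, div_le_iff₀ hGfpos]
      have hsq : ‖gradient F (θt t)‖^2 ≤ ‖gradient F (θt t)‖ * Gf := by
        nlinarith [norm_nonneg (gradient F (θt t)), hFGf (θt t)]
      nlinarith [mul_le_mul_of_nonneg_left hsq hρminpos.le]
    have h11 : ρmin * ‖gradient F (θt t)‖ ≤ ρmin * ∑ q, ‖gradient F (θt t) q‖ :=
      mul_le_mul_of_nonneg_left hnorm_le hρminpos.le
    linarith
  -- per-round descent
  have hgnorm : ∀ t, ‖g t‖^2 ≤ Glayer2 := by
    intro t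
    rw [hGlayer2, PiLp.norm_sq_eq_of_L2]
    refine Finset.sum_le_sum fun q _ => ?_
    have h := hGq t q
    nlinarith [norm_nonneg (g t q)]
  have hstep_ineq : ∀ t, c * ‖gradient F (θt t)‖^2
      ≤ (F (θt t) - F (θt (t+1)))/ηg + L*ηg*Glayer2/2 + ηl*((Kmax:ℝ)-1)*Blayer := by
    intro t
    have hd := descent_lemma F L hL0 hFdiff hFlip (θt t) (-(ηg • g t))
    have hθ : θt t + -(ηg • g t) = θt (t+1) := by rw [hstep t, sub_eq_add_neg]
    rw [hθ] at hd
    rw [inner_neg_right, real_inner_smul_right, norm_neg, norm_smul, Real.norm_eq_abs,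
      abs_of_pos hηg, mul_pow] at hd
    have h3 : L/2*(ηg^2*‖g t‖^2) ≤ L/2*(ηg^2*Glayer2) := by
      apply mul_le_mul_of_nonneg_left _ (by linarith)
      exact mul_le_mul_of_nonneg_left (hgnorm t) (by positivity)
    have h4 : ηg * ⟪gradient F (θt t), g t⟫_ℝ
        ≤ (F (θt t) - F (θt (t+1))) + L*ηg^2*Glayer2/2 := by linarith
    have h5 : ⟪gradient F (θt t), g t⟫_ℝ
        ≤ ((F (θt t) - F (θt (t+1))) + L*ηg^2*Glayer2/2)/ηg := by
      rw [le_div_iff₀ hηg, mul_comm]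
      linarith
    have h6 : ((F (θt t) - F (θt (t+1))) + L*ηg^2*Glayer2/2)/ηg
        = (F (θt t) - F (θt (t+1)))/ηg + L*ηg*Glayer2/2 := by
      field_simp
    rw [h6] at h5
    linarith [key t]
  -- summation
  have hsumT : c * ∑ t ∈ Finset.range T, ‖gradient F (θt t)‖^2
      ≤ (F (θt 0) - Fstar)/ηg
        + T * (L*ηg*Glayer2/2 + ηl*((Kmax:ℝ)-1)*Blayer) := by
    have h1 : ∑ t ∈ Finset.range T, c * ‖gradient F (θt t)‖^2
        ≤ ∑ t ∈ Finset.range T,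
          ((F (θt t) - F (θt (t+1)))/ηg + (L*ηg*Glayer2/2 + ηl*((Kmax:ℝ)-1)*Blayer)) := by
      refine Finset.sum_le_sum fun t _ => ?_
      have := hstep_ineq t
      linarith
    rw [← Finset.mul_sum] at h1
    rw [Finset.sum_add_distrib, Finset.sum_const, Finset.card_range, nsmul_eq_mul] at h1
    have h2 : ∑ t ∈ Finset.range T, (F (θt t) - F (θt (t+1)))/ηg
        = (F (θt 0) - F (θt T))/ηg := by
      rw [← Finset.sum_div, Finset.sum_range_sub' (fun t => F (θt t)) T]
    rw [h2] at h1
    have h3 : (F (θt 0) - F (θt T))/ηg ≤ (F (θt 0) - Fstar)/ηg := by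
      gcongr
      exact hFstar (θt T)
    linarith
  -- final algebra
  have hT0 : (0:ℝ) < T := by exact_mod_cast hT
  have hfinal : (F (θt 0) - Fstar)/(c*ηg*T) + L*ηg*Glayer2/(2*c)
      + Blayer/c*(ηl*((Kmax:ℝ)-1))
      = ((F (θt 0) - Fstar)/ηg + T*(L*ηg*Glayer2/2 + ηl*((Kmax:ℝ)-1)*Blayer)) / (c*T) := by
    field_simp
    ring
  rw [hfinal, le_div_iff₀ (by positivity : (0:ℝ) < c*T)]
  have heq2 : 1/(T:ℝ) * (∑ t ∈ Finset.range T, ‖gradient F (θt t)‖^2) * (c*T)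
      = c * ∑ t ∈ Finset.range T, ‖gradient F (θt t)‖^2 := by
    field_simp
  rw [heq2]
  exact hsumT
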